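/- Let L be an uncountable ℝ-embeddable complete linear order whose minimum is non-isolated. Then L is order-isomorphic to a lexicographic sum ∑_{x ∈ [0,1]} L_x indexed by the real unit interval [0,1], where: (L1) each L_x is a nonempty at most countable complete linear order; (L2) the set {x ∈ [0,1] : |L_x| > 1} is at most countable; (L3) either L_0 has exactly one element or the minimum of L_0 is non-isolated. -/

import Mathlib

open MeasureTheory Set
open scoped ENNReal


lemma exists_good_measure (C : Set ℝ) (hC : IsClosed C) (hunc : ¬C.Countable) :
    ∃ ω : Measure ℝ, ω Set.univ = 1 ∧ (∀ t : ℝ, ω {t} = 0) ∧ ω Cᶜ = 0 := by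
  haveI : PolishSpace C := hC.polishSpace
  have hcc : ¬Countable C := by rwa [Set.countable_coe_iff]
  have hR : ¬Countable ℝ := fun h => (Cardinal.not_countable_real) (Set.countable_univ)
  have e : ℝ ≃ᵐ C := PolishSpace.measurableEquivOfNotCountable hR hcc
  set μ₀ : Measure ℝ := volume.restrict (Set.Icc (0:ℝ) 1) with hμ₀
  have hμ₀univ : μ₀ Set.univ = 1 := by
    rw [hμ₀, Measure.restrict_apply_univ, Real.volume_Icc]; norm_num
  set F : ℝ → ℝ := fun x => ((e x : ℝ)) with hF
  have hFmeas : Measurable F := measurable_subtype_coe.comp e.measurable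
  have hFinj : Function.Injective F := Subtype.val_injective.comp e.injective
  refine ⟨Measure.map F μ₀, ?_, ?_, ?_⟩
  · rw [Measure.map_apply hFmeas MeasurableSet.univ, Set.preimage_univ, hμ₀univ]
  · intro t
    rw [Measure.map_apply hFmeas (measurableSet_singleton t)]
    have hss : (F ⁻¹' {t}).Subsingleton := fun a ha b hb => hFinj (ha.trans hb.symm)
    have h1 : μ₀ (F ⁻¹' {t}) ≤ volume (F ⁻¹' {t}) := Measure.restrict_le_self _
    exact le_antisymm (h1.trans_eq (hss.measure_zero _)) (zero_le)
  · rw [Measure.map_apply hFmeas hC.measurableSet.compl]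
    have : F ⁻¹' Cᶜ = ∅ := by ext x; simp [hF, (e x).2]
    simp [this]

/-- An uncountable ℝ-embeddable complete linear order with non-isolated minimum is a
lexicographic sum over `[0,1]` of at most countable nonempty complete linear orders,
almost all of which are singletons.  The lexicographic-sum decomposition is encoded by a
monotone surjection `f : L → [0,1]` whose fibres are the summands `L_x`. -/
theorem uncountable_complete_order_decomposition
    (L : Type*) [LinearOrder L] [Uncountable L]
    (hemb : ∃ f : L → ℝ, StrictMono f)
    (hmin : ∃ m : L, IsBot m) (hmax : ∃ M : L, IsTop M)
    (hsup : ∀ S : Set L, ∃ s, IsLUB S s)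
    (hnoniso : ∀ m : L, IsBot m → ∀ x, m < x → ∃ y, m < y ∧ y < x) :
    ∃ f : L → Set.Icc (0 : ℝ) 1, Monotone f ∧ Function.Surjective f ∧
      -- (L1) each summand `L_x = f ⁻¹' {x}` is a nonempty at most countable
      -- complete linear order (in the order inherited from `L`):
      (∀ x : Set.Icc (0 : ℝ) 1, (f ⁻¹' {x}).Countable) ∧
      (∀ x : Set.Icc (0 : ℝ) 1, ∃ m ∈ f ⁻¹' {x}, ∀ a ∈ f ⁻¹' {x}, m ≤ a) ∧
      (∀ x : Set.Icc (0 : ℝ) 1, ∃ M ∈ f ⁻¹' {x}, ∀ a ∈ f ⁻¹' {x}, a ≤ M) ∧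
      (∀ x : Set.Icc (0 : ℝ) 1, ∀ S ⊆ f ⁻¹' {x}, ∃ s ∈ f ⁻¹' {x},
        (∀ a ∈ S, a ≤ s) ∧ ∀ b ∈ f ⁻¹' {x}, (∀ a ∈ S, a ≤ b) → s ≤ b) ∧
      -- (L2) all but countably many summands are singletons:
      {x : Set.Icc (0 : ℝ) 1 | ¬ (f ⁻¹' {x}).Subsingleton}.Countable ∧
      -- (L3) the summand over `0` is a singleton or has non-isolated minimum:
      ((f ⁻¹' {(⟨0, by norm_num⟩ : Set.Icc (0 : ℝ) 1)}).Subsingleton ∨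
        ∃ m ∈ f ⁻¹' {(⟨0, by norm_num⟩ : Set.Icc (0 : ℝ) 1)},
          (∀ a ∈ f ⁻¹' {(⟨0, by norm_num⟩ : Set.Icc (0 : ℝ) 1)}, m ≤ a) ∧
          ∀ x ∈ f ⁻¹' {(⟨0, by norm_num⟩ : Set.Icc (0 : ℝ) 1)}, m < x →
            ∃ y ∈ f ⁻¹' {(⟨0, by norm_num⟩ : Set.Icc (0 : ℝ) 1)}, m < y ∧ y < x) := by
  classical
  obtain ⟨g, hg⟩ := hemb
  obtain ⟨m, hm⟩ := hmin
  obtain ⟨M, hM⟩ := hmax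
  -- the closure of the image
  set K : Set ℝ := closure (Set.range g) with hK
  have hrangeK : Set.range g ⊆ K := subset_closure
  have hKunc : ¬K.Countable := by
    intro h
    have h1 : (Set.range g).Countable := h.mono hrangeK
    have h2 : Countable (Set.range g) := h1.to_subtype
    have h3 : Countable L := Countable.of_equiv _ (Equiv.ofInjective g hg.injective).symm
    exact (not_countable (α := L)) h3
  -- the "condensation kernel" P of K
  set Bad : Set ℝ := ⋃ q : ℚ × ℚ, ⋃ _ : (Set.Ioo (q.1 : ℝ) q.2 ∩ K).Countable,
    Set.Ioo (q.1 : ℝ) q.2 with hBad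
  set P : Set ℝ := K \ Bad with hP
  have hPK : P ⊆ K := diff_subset
  have hPclosed : IsClosed P := by
    have hBadopen : IsOpen Bad := isOpen_iUnion (fun q => isOpen_iUnion (fun _ => isOpen_Ioo))
    have : P = K ∩ Badᶜ := rfl
    rw [this]
    exact isClosed_closure.inter (isClosed_compl_iff.mpr hBadopen)
  have hKP : (K \ P).Countable := by
    have hsub : K \ P ⊆ ⋃ q : ℚ × ℚ, ⋃ _ : (Set.Ioo (q.1 : ℝ) q.2 ∩ K).Countable,
        (Set.Ioo (q.1 : ℝ) q.2 ∩ K) := by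
      intro t ht
      obtain ⟨htK, htB⟩ := ht
      have : t ∈ Bad := by
        by_contra hn
        exact htB ⟨htK, hn⟩
      obtain ⟨s, ⟨q, rfl⟩, hts⟩ := this
      obtain ⟨s', ⟨hc, rfl⟩, hts'⟩ := hts
      exact mem_iUnion.mpr ⟨q, mem_iUnion.mpr ⟨hc, hts', htK⟩⟩
    exact (Set.countable_iUnion (fun q : ℚ × ℚ =>
      Set.countable_iUnion (fun hc : (Set.Ioo (q.1 : ℝ) q.2 ∩ K).Countable => hc))).mono hsub
  -- the family of measures
  have hν : ∀ q : ℚ × ℚ, ∃ ω : Measure ℝ, ω Set.univ ≤ 1 ∧ (∀ t : ℝ, ω {t} = 0) ∧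
      ω Pᶜ = 0 ∧ (¬(Set.Ioo (q.1 : ℝ) q.2 ∩ K).Countable →
        (ω Set.univ = 1 ∧ ω (Set.Icc (q.1 : ℝ) q.2)ᶜ = 0)) := by
    intro q
    by_cases h : ¬(Set.Ioo (q.1 : ℝ) q.2 ∩ K).Countable
    · have hCcl : IsClosed (Set.Icc (q.1 : ℝ) q.2 ∩ P) := isClosed_Icc.inter hPclosed
      have hCunc : ¬(Set.Icc (q.1 : ℝ) q.2 ∩ P).Countable := by
        intro hc
        apply h
        have : Set.Ioo (q.1 : ℝ) q.2 ∩ K ⊆ (K \ P) ∪ (Set.Icc (q.1 : ℝ) q.2 ∩ P) := by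
          intro t ⟨ht1, ht2⟩
          by_cases htP : t ∈ P
          · exact Or.inr ⟨Ioo_subset_Icc_self ht1, htP⟩
          · exact Or.inl ⟨ht2, htP⟩
        exact ((hKP.union hc).mono this)
      obtain ⟨ω, h1, h2, h3⟩ := exists_good_measure _ hCcl hCunc
      refine ⟨ω, h1.le, h2, ?_, fun _ => ⟨h1, ?_⟩⟩
      · exact measure_mono_null (compl_subset_compl.mpr inter_subset_right) h3
      · exact measure_mono_null (compl_subset_compl.mpr inter_subset_left) h3
    · exact ⟨0, by simp, by simp, by simp, fun hc => absurd hc (by simpa using h)⟩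
  choose ν hν1 hν2 hν3 hν4 using hν
  set e : ℕ ≃ ℚ × ℚ := (Denumerable.eqv (ℚ × ℚ)).symm with he
  set w : ℕ → ℝ≥0∞ := fun n => (2 : ℝ≥0∞)⁻¹ ^ (n + 1) with hw
  have hwpos : ∀ n, 0 < w n := by
    intro n
    refine pos_iff_ne_zero.mpr ?_
    rw [hw]
    exact pow_ne_zero _ (ENNReal.inv_ne_zero.mpr (by norm_num))
  set μ : Measure ℝ := Measure.sum (fun n => w n • ν (e n)) with hμ
  have hμapp : ∀ s : Set ℝ, MeasurableSet s → μ s = ∑' n, w n * ν (e n) s := by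
    intro s hs
    rw [hμ, Measure.sum_apply _ hs]
    simp [Measure.smul_apply, smul_eq_mul]
  -- atoms
  have hμatom : ∀ t : ℝ, μ {t} = 0 := by
    intro t
    rw [hμapp _ (measurableSet_singleton t)]
    simp [hν2]
  -- concentrated on P
  have hμPc : μ Pᶜ = 0 := by
    rw [hμapp _ hPclosed.measurableSet.compl]
    simp [hν3]
  -- finiteness
  have hμfin : ∀ s : Set ℝ, μ s ≠ ⊤ := by
    have huniv : μ Set.univ ≤ 2 := by
      rw [hμapp _ MeasurableSet.univ]
      calc ∑' n, w n * ν (e n) Set.univ ≤ ∑' n : ℕ, (2 : ℝ≥0∞)⁻¹ ^ n := by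
            apply ENNReal.tsum_le_tsum
            intro n
            calc w n * ν (e n) Set.univ ≤ w n * 1 := mul_le_mul_right (hν1 _) _
            _ = (2 : ℝ≥0∞)⁻¹ ^ n * 2⁻¹ := by rw [mul_one, hw]; ring
            _ ≤ (2 : ℝ≥0∞)⁻¹ ^ n * 1 := mul_le_mul_right (ENNReal.inv_le_one.mpr one_le_two) _
            _ = (2 : ℝ≥0∞)⁻¹ ^ n := mul_one _
      _ = (1 - 2⁻¹)⁻¹ := ENNReal.tsum_geometric _
      _ = 2 := by rw [ENNReal.one_sub_inv_two, inv_inv]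
    intro s
    exact ne_top_of_le_ne_top (by norm_num)
      ((measure_mono (subset_univ s)).trans huniv)
  -- positivity on intervals meeting P
  have hμpos : ∀ α β : ℝ, (Set.Ioo α β ∩ P).Nonempty → 0 < μ (Set.Ioo α β) := by
    rintro α β ⟨p, hp1, hp2⟩
    obtain ⟨a, ha1, ha2⟩ := exists_rat_btwn hp1.1
    obtain ⟨b, hb1, hb2⟩ := exists_rat_btwn hp1.2
    have hq : ¬(Set.Ioo ((a, b).1 : ℝ) (a, b).2 ∩ K).Countable := by
      intro hc
      apply hp2.2
      rw [hBad]
      exact mem_iUnion.mpr ⟨(a, b), mem_iUnion.mpr ⟨hc, ha2, hb1⟩⟩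
    obtain ⟨hν4a, hν4b⟩ := hν4 (a, b) hq
    set n : ℕ := e.symm (a, b) with hn
    have hen : e n = (a, b) := by rw [hn, Equiv.apply_symm_apply]
    have hIcc : Set.Icc ((a : ℝ)) b ⊆ Set.Ioo α β := fun t ht =>
      ⟨lt_of_lt_of_le ha1 ht.1, lt_of_le_of_lt ht.2 hb2⟩
    have hν_Ioo : 1 ≤ ν (a, b) (Set.Ioo α β) := by
      have h0 : ν (a, b) (Set.Ioo α β)ᶜ = 0 :=
        measure_mono_null (compl_subset_compl.mpr hIcc) hν4b
      calc (1 : ℝ≥0∞) = ν (a, b) Set.univ := hν4a.symm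
      _ = ν (a, b) (Set.Ioo α β ∪ (Set.Ioo α β)ᶜ) := by rw [Set.union_compl_self]
      _ ≤ ν (a, b) (Set.Ioo α β) + ν (a, b) (Set.Ioo α β)ᶜ := measure_union_le _ _
      _ = ν (a, b) (Set.Ioo α β) := by rw [h0, add_zero]
    have hterm : w n * ν (e n) (Set.Ioo α β) ≤ μ (Set.Ioo α β) := by
      rw [hμapp _ measurableSet_Ioo]
      exact ENNReal.le_tsum n
    calc (0 : ℝ≥0∞) < w n * 1 := by simpa using hwpos n
    _ ≤ w n * ν (e n) (Set.Ioo α β) := mul_le_mul_right (by rw [hen]; exact hν_Ioo) _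
    _ ≤ μ (Set.Ioo α β) := hterm
  -- total mass positive
  have hT0 : μ Set.univ ≠ 0 := by
    intro hz
    have hall : ∀ q : ℚ × ℚ, (Set.Ioo (q.1 : ℝ) q.2 ∩ K).Countable := by
      intro q
      by_contra h
      have h1 : ν q Set.univ = 1 := (hν4 q h).1
      set n : ℕ := e.symm q
      have hen : e n = q := Equiv.apply_symm_apply _ _
      have : w n * ν (e n) Set.univ ≤ μ Set.univ := by
        rw [hμapp _ MeasurableSet.univ]; exact ENNReal.le_tsum n
      rw [hz, hen, h1, mul_one] at this
      exact absurd (le_antisymm this (zero_le)) (ne_of_gt (hwpos n))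
    apply hKunc
    have hcover : K ⊆ ⋃ q : ℚ × ℚ, (Set.Ioo (q.1 : ℝ) q.2 ∩ K) := by
      intro t ht
      obtain ⟨a, ha1, ha2⟩ := exists_rat_btwn (show t - 1 < t by linarith)
      obtain ⟨b, hb1, hb2⟩ := exists_rat_btwn (show t < t + 1 by linarith)
      exact mem_iUnion.mpr ⟨(a, b), ⟨ha2, hb1⟩, ht⟩
    exact (Set.countable_iUnion (fun q => (hall q).mono inter_subset_right)).mono
      (by intro t ht; obtain ⟨s, ⟨q, rfl⟩, h⟩ := hcover ht;
          exact mem_iUnion.mpr ⟨q, h.1, mem_inter h.1 ht⟩)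

  -- normalized distribution function
  set T : ℝ≥0∞ := μ Set.univ with hT
  have hTtop : T ≠ ⊤ := hμfin _
  have tpos : 0 < T.toReal := ENNReal.toReal_pos hT0 hTtop
  set F : ℝ → ℝ := fun t => (μ (Set.Iic t)).toReal / T.toReal with hF
  have hFmono : Monotone F := by
    intro a b hab
    have h1 : (μ (Set.Iic a)).toReal ≤ (μ (Set.Iic b)).toReal :=
      ENNReal.toReal_mono (hμfin _) (measure_mono (Set.Iic_subset_Iic.mpr hab))
    show (μ (Set.Iic a)).toReal / T.toReal ≤ (μ (Set.Iic b)).toReal / T.toReal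
    gcongr
  have hF0 : ∀ t, 0 ≤ F t := fun t => div_nonneg ENNReal.toReal_nonneg tpos.le
  have hF1 : ∀ t, F t ≤ 1 := by
    intro t
    rw [hF]
    exact (div_le_one tpos).mpr (ENNReal.toReal_mono hTtop (measure_mono (subset_univ _)))
  -- F is strictly increasing across P
  have hF2 : ∀ α β : ℝ, (Set.Ioo α β ∩ P).Nonempty → F α < F β := by
    intro α β hne
    have hdisj : Disjoint (Set.Iic α) (Set.Ioo α β) := by
      rw [Set.disjoint_left]
      rintro t ht1 ⟨ht2, _⟩
      exact absurd ht1 (not_le.mpr ht2)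
    have hαβ : α < β := by
      obtain ⟨p, hp, _⟩ := hne
      exact hp.1.trans hp.2
    have hsub2 : Set.Iic α ∪ Set.Ioo α β ⊆ Set.Iic β := by
      rintro t (ht | ht)
      · exact ht.trans hαβ.le
      · exact Set.mem_Iic.mpr ht.2.le
    have h1 : μ (Set.Iic α) + μ (Set.Ioo α β) ≤ μ (Set.Iic β) := by
      rw [← measure_union hdisj measurableSet_Ioo]
      exact measure_mono hsub2
    have h2 : μ (Set.Iic α) < μ (Set.Iic β) :=
      lt_of_lt_of_le (ENNReal.lt_add_right (hμfin _) (ne_of_gt (hμpos α β hne))) h1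
    have h3 : (μ (Set.Iic α)).toReal < (μ (Set.Iic β)).toReal :=
      (ENNReal.toReal_lt_toReal (hμfin _) (hμfin _)).mpr h2
    show (μ (Set.Iic α)).toReal / T.toReal < (μ (Set.Iic β)).toReal / T.toReal
    gcongr

  -- F increases only where L is dense
  have hFmu : ∀ α β : ℝ, F α < F β → μ (Set.Iic α) < μ (Set.Iic β) := by
    intro α β h
    by_contra hn
    push_neg at hn
    have : F β ≤ F α := by
      have h1 : (μ (Set.Iic β)).toReal ≤ (μ (Set.Iic α)).toReal :=
        ENNReal.toReal_mono (hμfin _) hn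
      show (μ (Set.Iic β)).toReal / T.toReal ≤ (μ (Set.Iic α)).toReal / T.toReal
      gcongr
    exact absurd h (not_lt.mpr this)
  have hF3 : ∀ α β : ℝ, F α < F β → ∃ c : L, α < g c ∧ g c < β := by
    intro α β h
    have hμlt := hFmu α β h
    have hIoo : μ (Set.Ioo α β) ≠ 0 := by
      intro h0
      have hIoc : μ (Set.Ioc α β) = 0 := by
        have : Set.Ioc α β ⊆ Set.Ioo α β ∪ {β} := by
          rintro t ⟨ht1, ht2⟩
          rcases lt_or_eq_of_le ht2 with h' | h'
          · exact Or.inl ⟨ht1, h'⟩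
          · exact Or.inr (by simp [h'])
        exact le_antisymm ((measure_mono this).trans
          ((measure_union_le _ _).trans (by rw [h0, hμatom, add_zero]))) (zero_le)
      have : μ (Set.Iic β) ≤ μ (Set.Iic α) := by
        have hsub : Set.Iic β ⊆ Set.Iic α ∪ Set.Ioc α β := by
          intro t ht
          rcases le_or_gt t α with h' | h'
          · exact Or.inl h'
          · exact Or.inr ⟨h', ht⟩
        calc μ (Set.Iic β) ≤ μ (Set.Iic α) + μ (Set.Ioc α β) :=
              (measure_mono hsub).trans (measure_union_le _ _)
        _ = μ (Set.Iic α) := by rw [hIoc, add_zero]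
      exact absurd this (not_le.mpr hμlt)
    have hPne : (Set.Ioo α β ∩ P).Nonempty := by
      rcases Set.eq_empty_or_nonempty (Set.Ioo α β ∩ P) with hn | hne2
      · exfalso
        have hss : Set.Ioo α β ⊆ Pᶜ := fun t ht htP =>
          Set.eq_empty_iff_forall_notMem.mp hn t ⟨ht, htP⟩
        exact hIoo (le_antisymm ((measure_mono hss).trans_eq hμPc) (zero_le))
      · exact hne2
    obtain ⟨p, hp1, hp2⟩ := hPne
    have hclos : p ∈ closure (Set.range g) := hPK hp2
    obtain ⟨y, hy1, c, rfl⟩ := _root_.mem_closure_iff.mp hclos (Set.Ioo α β) isOpen_Ioo hp1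
    exact ⟨c, hy1.1, hy1.2⟩
  have hF4 : ∀ α β : ℝ, F α = F β → ∀ t ∈ Set.Ioo α β, t ∉ P := by
    intro α β hFe t ht htP
    exact absurd (hF2 α β ⟨t, ht, htP⟩) (by rw [hFe]; exact lt_irrefl _)
  -- left and right continuity
  have hF5 : ∀ (t : ℝ) (x : ℝ), 0 ≤ x → (∀ r, r < t → F r ≤ x) → F t ≤ x := by
    intro t x hx h
    set B : ℝ≥0∞ := ENNReal.ofReal (x * T.toReal) with hB
    have hxT : 0 ≤ x * T.toReal := mul_nonneg hx tpos.le
    have hmem : ∀ n : ℕ, μ (Set.Iic (t - 1 / ((n : ℝ) + 1))) ≤ B := by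
      intro n
      have hlt : t - 1 / ((n : ℝ) + 1) < t := by
        have : 0 < 1 / ((n : ℝ) + 1) := by positivity
        linarith
      have h1 : F (t - 1 / ((n : ℝ) + 1)) ≤ x := h _ hlt
      have h2 : (μ (Set.Iic (t - 1 / ((n : ℝ) + 1)))).toReal ≤ x * T.toReal := by
        rw [← div_le_iff₀ tpos] at *
        exact h1
      exact (ENNReal.le_ofReal_iff_toReal_le (hμfin _) hxT).mpr h2
    have hmono : Monotone (fun n : ℕ => Set.Iic (t - 1 / ((n : ℝ) + 1))) := by
      intro a b hab
      apply Set.Iic_subset_Iic.mpr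
      have : 1 / ((b : ℝ) + 1) ≤ 1 / ((a : ℝ) + 1) := by
        apply one_div_le_one_div_of_le (by positivity)
        exact_mod_cast by omega
      linarith
    have hunion : Set.Iio t = ⋃ n : ℕ, Set.Iic (t - 1 / ((n : ℝ) + 1)) := by
      ext r
      simp only [Set.mem_Iio, Set.mem_iUnion, Set.mem_Iic]
      constructor
      · intro hr
        obtain ⟨n, hn⟩ := exists_nat_one_div_lt (show (0:ℝ) < t - r by linarith)
        exact ⟨n, by linarith⟩
      · rintro ⟨n, hn⟩
        have : 0 < 1 / ((n : ℝ) + 1) := by positivity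
        linarith
    have hIio : μ (Set.Iio t) ≤ B := by
      rw [hunion, hmono.measure_iUnion]
      exact iSup_le hmem
    have hIic : μ (Set.Iic t) ≤ B := by
      have : Set.Iic t ⊆ Set.Iio t ∪ {t} := by
        intro r hr
        rcases lt_or_eq_of_le (Set.mem_Iic.mp hr) with h' | h'
        · exact Or.inl h'
        · exact Or.inr (by simp [h'])
      calc μ (Set.Iic t) ≤ μ (Set.Iio t) + μ {t} := (measure_mono this).trans (measure_union_le _ _)
      _ = μ (Set.Iio t) := by rw [hμatom, add_zero]
      _ ≤ B := hIio
    have : (μ (Set.Iic t)).toReal ≤ x * T.toReal :=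
      ENNReal.toReal_le_of_le_ofReal hxT hIic
    show (μ (Set.Iic t)).toReal / T.toReal ≤ x
    rw [div_le_iff₀ tpos]
    exact this
  have hF6 : ∀ (t : ℝ) (x : ℝ), 0 ≤ x → (∀ r, t < r → x ≤ F r) → x ≤ F t := by
    intro t x hx h
    set B : ℝ≥0∞ := ENNReal.ofReal (x * T.toReal) with hB
    have hxT : 0 ≤ x * T.toReal := mul_nonneg hx tpos.le
    have hmem : ∀ n : ℕ, B ≤ μ (Set.Iic (t + 1 / ((n : ℝ) + 1))) := by
      intro n
      have hlt : t < t + 1 / ((n : ℝ) + 1) := by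
        have : 0 < 1 / ((n : ℝ) + 1) := by positivity
        linarith
      have h1 : x ≤ F (t + 1 / ((n : ℝ) + 1)) := h _ hlt
      have h2 : x * T.toReal ≤ (μ (Set.Iic (t + 1 / ((n : ℝ) + 1)))).toReal := by
        rw [← le_div_iff₀ tpos]
        exact h1
      exact ENNReal.ofReal_le_of_le_toReal h2
    have hanti : Antitone (fun n : ℕ => Set.Iic (t + 1 / ((n : ℝ) + 1))) := by
      intro a b hab
      apply Set.Iic_subset_Iic.mpr
      have : 1 / ((b : ℝ) + 1) ≤ 1 / ((a : ℝ) + 1) := by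
        apply one_div_le_one_div_of_le (by positivity)
        exact_mod_cast by omega
      linarith
    have hinter : Set.Iic t = ⋂ n : ℕ, Set.Iic (t + 1 / ((n : ℝ) + 1)) := by
      ext r
      simp only [Set.mem_Iic, Set.mem_iInter]
      constructor
      · intro hr n
        have : 0 < 1 / ((n : ℝ) + 1) := by positivity
        linarith
      · intro hr
        by_contra hn
        push_neg at hn
        obtain ⟨n, h'⟩ := exists_nat_one_div_lt (show (0:ℝ) < r - t by linarith)
        have := hr n
        linarith
    have hIic : B ≤ μ (Set.Iic t) := by
      rw [hinter, hanti.measure_iInter (fun n => measurableSet_Iic.nullMeasurableSet)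
        ⟨0, hμfin _⟩]
      exact le_iInf hmem
    have : x * T.toReal ≤ (μ (Set.Iic t)).toReal := by
      have h1 := ENNReal.toReal_mono (hμfin _) hIic
      rwa [ENNReal.toReal_ofReal hxT] at h1
    show x ≤ (μ (Set.Iic t)).toReal / T.toReal
    rw [le_div_iff₀ tpos]
    exact this
  -- values at endpoints
  have hKge : K ⊆ Set.Ici (g m) := by
    rw [hK]
    apply closure_minimal _ isClosed_Ici
    rintro y ⟨a, rfl⟩
    exact hg.monotone (hm a)
  have hKle : K ⊆ Set.Iic (g M) := by
    rw [hK]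
    apply closure_minimal _ isClosed_Iic
    rintro y ⟨a, rfl⟩
    exact hg.monotone (hM a)
  have hFgm : F (g m) = 0 := by
    have hμIic : μ (Set.Iic (g m)) = 0 := by
      have hsub : Set.Iic (g m) ⊆ Pᶜ ∪ {g m} := by
        intro t ht
        by_cases htP : t ∈ P
        · exact Or.inr (by simpa using le_antisymm ht (hKge (hPK htP)))
        · exact Or.inl htP
      exact le_antisymm ((measure_mono hsub).trans ((measure_union_le _ _).trans
        (by rw [hμPc, hμatom, add_zero]))) (zero_le)
    show (μ (Set.Iic (g m))).toReal / T.toReal = 0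
    rw [hμIic]
    simp
  have hFgM : F (g M) = 1 := by
    have hμIic : μ (Set.Iic (g M)) = T := by
      apply le_antisymm (measure_mono (subset_univ _))
      have hIoi : μ (Set.Ioi (g M)) = 0 := by
        apply measure_mono_null _ hμPc
        intro t ht htP
        exact absurd (hKle (hPK htP)) (fun h => (not_le.mpr (Set.mem_Ioi.mp ht)) h)
      calc T = μ (Set.Iic (g M) ∪ Set.Ioi (g M)) := by rw [Set.Iic_union_Ioi]
      _ ≤ μ (Set.Iic (g M)) + μ (Set.Ioi (g M)) := measure_union_le _ _
      _ = μ (Set.Iic (g M)) := by rw [hIoi, add_zero]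
    show (μ (Set.Iic (g M))).toReal / T.toReal = 1
    rw [hμIic, div_self (ne_of_gt tpos)]

  -- the decomposition map
  set f : L → Set.Icc (0 : ℝ) 1 := fun a => ⟨F (g a), hF0 _, hF1 _⟩ with hf
  have hfval : ∀ a : L, (f a : ℝ) = F (g a) := fun a => rfl
  have hfib : ∀ (x : Set.Icc (0 : ℝ) 1) (a : L), a ∈ f ⁻¹' {x} ↔ F (g a) = (x : ℝ) := by
    intro x a
    simp only [Set.mem_preimage, Set.mem_singleton_iff]
    constructor
    · intro h; rw [← h]
    · intro h; exact Subtype.ext h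
  have hx01 : ∀ x : Set.Icc (0 : ℝ) 1, 0 ≤ (x : ℝ) ∧ (x : ℝ) ≤ 1 := fun x => x.2
  have hfmono : Monotone f := fun a b hab => Subtype.mk_le_mk.mpr (hFmono (hg.monotone hab))
  -- surjectivity
  have hsurj : Function.Surjective f := by
    intro x
    set S : Set L := {b | F (g b) ≤ (x : ℝ)} with hS
    have hmS : m ∈ S := by rw [hS]; simp only [Set.mem_setOf_eq, hFgm]; exact (hx01 x).1
    obtain ⟨a, ha⟩ := hsup S
    have hbddim : BddAbove (g '' S) := ⟨g a, by
      rintro y ⟨b, hb, rfl⟩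
      exact hg.monotone (ha.1 hb)⟩
    have hneim : (g '' S).Nonempty := ⟨g m, m, hmS, rfl⟩
    have h1 : F (g a) ≤ (x : ℝ) := by
      by_contra h
      push_neg at h
      have hFt : F (sSup (g '' S)) ≤ (x : ℝ) := by
        apply hF5 _ _ (hx01 x).1
        intro r hr
        obtain ⟨y, ⟨b, hb, rfl⟩, hy⟩ := exists_lt_of_lt_csSup hneim hr
        exact (hFmono hy.le).trans hb
      obtain ⟨c, hc1, hc2⟩ := hF3 _ _ (lt_of_le_of_lt hFt h)
      have hub : c ∈ upperBounds S := by
        intro b hb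
        have : g b ≤ sSup (g '' S) := le_csSup hbddim ⟨b, hb, rfl⟩
        exact (hg.lt_iff_lt.mp (lt_of_le_of_lt this hc1)).le
      exact absurd (hg.lt_iff_lt.mp hc2) (not_lt.mpr (ha.2 hub))
    have h2 : (x : ℝ) ≤ F (g a) := by
      by_contra h
      push_neg at h
      set u : ℝ := sSup {t | t ≤ g M ∧ F t < (x : ℝ)} with hu
      have hune : {t | t ≤ g M ∧ F t < (x : ℝ)}.Nonempty :=
        ⟨g a, hg.monotone (hM a), h⟩
      have hubdd : BddAbove {t | t ≤ g M ∧ F t < (x : ℝ)} := ⟨g M, fun t ht => ht.1⟩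
      have hu1 : F u ≤ (x : ℝ) := by
        apply hF5 _ _ (hx01 x).1
        intro r hr
        obtain ⟨t, ht, hrt⟩ := exists_lt_of_lt_csSup hune hr
        exact (hFmono hrt.le).trans ht.2.le
      have hu2 : (x : ℝ) ≤ F u := by
        apply hF6 _ _ (hx01 x).1
        intro r hr
        by_cases hrM : r ≤ g M
        · by_contra hlt
          push_neg at hlt
          exact absurd (le_csSup hubdd ⟨hrM, hlt⟩) (not_le.mpr hr)
        · push_neg at hrM
          calc (x : ℝ) ≤ 1 := (hx01 x).2
          _ = F (g M) := hFgM.symm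
          _ ≤ F r := hFmono hrM.le
      obtain ⟨c, hc1, hc2⟩ := hF3 (g a) u (lt_of_lt_of_le h hu2)
      have hcS : c ∈ S := by
        rw [hS]
        exact Set.mem_setOf_eq ▸ ((hFmono hc2.le).trans hu1)
      exact absurd hc1 (not_lt.mpr (hg.monotone (ha.1 hcS)))
    exact ⟨a, Subtype.ext (le_antisymm h1 h2)⟩

  -- fiber minima
  have hfibmin : ∀ x : Set.Icc (0 : ℝ) 1, ∃ i ∈ f ⁻¹' {x}, ∀ a ∈ f ⁻¹' {x}, i ≤ a := by
    intro x
    obtain ⟨a₀, ha₀⟩ := hsurj x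
    have ha₀m : a₀ ∈ f ⁻¹' {x} := ha₀
    set Slb : Set L := {b | ∀ a ∈ f ⁻¹' {x}, b ≤ a} with hSlb
    obtain ⟨i, hi⟩ := hsup Slb
    have hiLb : ∀ a ∈ f ⁻¹' {x}, i ≤ a := fun a ha => hi.2 (fun b hb => hb a ha)
    have hiF : F (g i) = (x : ℝ) := by
      apply le_antisymm
      · calc F (g i) ≤ F (g a₀) := hFmono (hg.monotone (hiLb _ ha₀m))
        _ = (x : ℝ) := (hfib x a₀).mp ha₀m
      · by_contra hlt
        push_neg at hlt
        have hneim : (g '' (f ⁻¹' {x})).Nonempty := ⟨g a₀, a₀, ha₀m, rfl⟩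
        have hbddb : BddBelow (g '' (f ⁻¹' {x})) := ⟨g m, by
          rintro y ⟨b, hb, rfl⟩
          exact hg.monotone (hm b)⟩
        set t₀ : ℝ := sInf (g '' (f ⁻¹' {x})) with ht₀
        have hFt₀ : (x : ℝ) ≤ F t₀ := by
          apply hF6 _ _ (hx01 x).1
          intro r hr
          obtain ⟨y, ⟨a, ha, rfl⟩, hy⟩ := exists_lt_of_csInf_lt hneim hr
          calc (x : ℝ) = F (g a) := ((hfib x a).mp ha).symm
          _ ≤ F r := hFmono hy.le
        obtain ⟨c, hc1, hc2⟩ := hF3 (g i) t₀ (lt_of_lt_of_le hlt hFt₀)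
        have hcLb : c ∈ Slb := by
          intro a ha
          have : t₀ ≤ g a := csInf_le hbddb ⟨a, ha, rfl⟩
          exact (hg.lt_iff_lt.mp (lt_of_lt_of_le hc2 this)).le
        exact absurd hc1 (not_lt.mpr (hg.monotone (hi.1 hcLb)))
    exact ⟨i, (hfib x i).mpr hiF, hiLb⟩
  -- fiber maxima
  have hfibmax : ∀ x : Set.Icc (0 : ℝ) 1, ∃ j ∈ f ⁻¹' {x}, ∀ a ∈ f ⁻¹' {x}, a ≤ j := by
    intro x
    obtain ⟨a₀, ha₀⟩ := hsurj x
    have ha₀m : a₀ ∈ f ⁻¹' {x} := ha₀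
    obtain ⟨j, hj⟩ := hsup (f ⁻¹' {x})
    have hjF : F (g j) = (x : ℝ) := by
      apply le_antisymm
      · by_contra hlt
        push_neg at hlt
        have hneim : (g '' (f ⁻¹' {x})).Nonempty := ⟨g a₀, a₀, ha₀m, rfl⟩
        have hbdda : BddAbove (g '' (f ⁻¹' {x})) := ⟨g j, by
          rintro y ⟨b, hb, rfl⟩
          exact hg.monotone (hj.1 hb)⟩
        set t₁ : ℝ := sSup (g '' (f ⁻¹' {x})) with ht₁
        have hFt₁ : F t₁ ≤ (x : ℝ) := by
          apply hF5 _ _ (hx01 x).1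
          intro r hr
          obtain ⟨y, ⟨a, ha, rfl⟩, hy⟩ := exists_lt_of_lt_csSup hneim hr
          calc F r ≤ F (g a) := hFmono hy.le
          _ = (x : ℝ) := (hfib x a).mp ha
        obtain ⟨c, hc1, hc2⟩ := hF3 t₁ (g j) (lt_of_le_of_lt hFt₁ hlt)
        have hcUb : c ∈ upperBounds (f ⁻¹' {x}) := by
          intro a ha
          have : g a ≤ t₁ := le_csSup hbdda ⟨a, ha, rfl⟩
          exact (hg.lt_iff_lt.mp (lt_of_le_of_lt this hc1)).le
        exact absurd hc2 (not_lt.mpr (hg.monotone (hj.2 hcUb)))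
      · calc (x : ℝ) = F (g a₀) := ((hfib x a₀).mp ha₀m).symm
        _ ≤ F (g j) := hFmono (hg.monotone (hj.1 ha₀m))
    exact ⟨j, (hfib x j).mpr hjF, hj.1⟩
  -- fiber completeness
  have hfibsup : ∀ x : Set.Icc (0 : ℝ) 1, ∀ S ⊆ f ⁻¹' {x}, ∃ s ∈ f ⁻¹' {x},
      (∀ a ∈ S, a ≤ s) ∧ ∀ b ∈ f ⁻¹' {x}, (∀ a ∈ S, a ≤ b) → s ≤ b := by
    intro x S hSsub
    rcases Set.eq_empty_or_nonempty S with rfl | ⟨a₀, ha₀⟩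
    · obtain ⟨i, hi1, hi2⟩ := hfibmin x
      exact ⟨i, hi1, fun a ha => absurd ha (notMem_empty a), fun b hb _ => hi2 b hb⟩
    · obtain ⟨s, hs⟩ := hsup S
      obtain ⟨j, hj1, hj2⟩ := hfibmax x
      have hsj : s ≤ j := hs.2 (fun a ha => hj2 a (hSsub ha))
      have hsF : F (g s) = (x : ℝ) := by
        apply le_antisymm
        · calc F (g s) ≤ F (g j) := hFmono (hg.monotone hsj)
          _ = (x : ℝ) := (hfib x j).mp hj1
        · calc (x : ℝ) = F (g a₀) := ((hfib x a₀).mp (hSsub ha₀)).symm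
          _ ≤ F (g s) := hFmono (hg.monotone (hs.1 ha₀))
      exact ⟨s, (hfib x s).mpr hsF, fun a ha => hs.1 ha, fun b _ hb => hs.2 hb⟩
  -- fibers are countable
  have hfibcount : ∀ x : Set.Icc (0 : ℝ) 1, (f ⁻¹' {x}).Countable := by
    intro x
    rcases Set.eq_empty_or_nonempty (f ⁻¹' {x}) with he | ⟨a₀, ha₀⟩
    · rw [he]; exact countable_empty
    · have hneim : (g '' (f ⁻¹' {x})).Nonempty := ⟨g a₀, a₀, ha₀, rfl⟩
      have hbddb : BddBelow (g '' (f ⁻¹' {x})) := ⟨g m, by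
        rintro y ⟨b, hb, rfl⟩
        exact hg.monotone (hm b)⟩
      have hbdda : BddAbove (g '' (f ⁻¹' {x})) := ⟨g M, by
        rintro y ⟨b, hb, rfl⟩
        exact hg.monotone (hM b)⟩
      set u : ℝ := sInf (g '' (f ⁻¹' {x})) with hudef
      set v : ℝ := sSup (g '' (f ⁻¹' {x})) with hvdef
      have hFu : (x : ℝ) ≤ F u := by
        apply hF6 _ _ (hx01 x).1
        intro r hr
        obtain ⟨y, ⟨a, ha, rfl⟩, hy⟩ := exists_lt_of_csInf_lt hneim hr
        calc (x : ℝ) = F (g a) := ((hfib x a).mp ha).symm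
        _ ≤ F r := hFmono hy.le
      have hFv : F v ≤ (x : ℝ) := by
        apply hF5 _ _ (hx01 x).1
        intro r hr
        obtain ⟨y, ⟨a, ha, rfl⟩, hy⟩ := exists_lt_of_lt_csSup hneim hr
        calc F r ≤ F (g a) := hFmono hy.le
        _ = (x : ℝ) := (hfib x a).mp ha
      have huv : u ≤ v := csInf_le_csSup hneim hbddb hbdda
      have hFuv : F u = F v := le_antisymm (hFmono huv) (hFv.trans hFu)
      have hE : ({u, v} ∪ (Set.Ioo u v ∩ K)).Countable := by
        apply Set.Countable.union (by simp)
        apply hKP.mono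
        intro t ⟨ht1, ht2⟩
        exact ⟨ht2, hF4 u v hFuv t ht1⟩
      have hsub : f ⁻¹' {x} ⊆ g ⁻¹' ({u, v} ∪ (Set.Ioo u v ∩ K)) := by
        intro a ha
        have h1 : u ≤ g a := csInf_le hbddb ⟨a, ha, rfl⟩
        have h2 : g a ≤ v := le_csSup hbdda ⟨a, ha, rfl⟩
        rcases eq_or_lt_of_le h1 with h1' | h1'
        · exact Or.inl (Or.inl h1'.symm)
        rcases eq_or_lt_of_le h2 with h2' | h2'
        · exact Or.inl (Or.inr h2')
        · exact Or.inr ⟨⟨h1', h2'⟩, hrangeK ⟨a, rfl⟩⟩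
      exact (hE.preimage hg.injective).mono hsub
  -- all but countably many fibers are singletons
  have hL2 : {x : Set.Icc (0 : ℝ) 1 | ¬ (f ⁻¹' {x}).Subsingleton}.Countable := by
    have key : ∀ x : {x : Set.Icc (0 : ℝ) 1 // ¬ (f ⁻¹' {x}).Subsingleton},
        ∃ q : ℚ, F (q : ℝ) = ((x : Set.Icc (0 : ℝ) 1) : ℝ) := by
      rintro ⟨x, hx⟩
      rw [Set.not_subsingleton_iff] at hx
      obtain ⟨a, ha, b, hb, hne⟩ := hx
      rcases (Ne.lt_or_gt hne) with hab | hab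
      · obtain ⟨q, hq1, hq2⟩ := exists_rat_btwn (hg hab)
        refine ⟨q, le_antisymm ?_ ?_⟩
        · calc F (q : ℝ) ≤ F (g b) := hFmono hq2.le
          _ = (x : ℝ) := (hfib x b).mp hb
        · calc (x : ℝ) = F (g a) := ((hfib x a).mp ha).symm
          _ ≤ F (q : ℝ) := hFmono hq1.le
      · obtain ⟨q, hq1, hq2⟩ := exists_rat_btwn (hg hab)
        refine ⟨q, le_antisymm ?_ ?_⟩
        · calc F (q : ℝ) ≤ F (g a) := hFmono hq2.le
          _ = (x : ℝ) := (hfib x a).mp ha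
        · calc (x : ℝ) = F (g b) := ((hfib x b).mp hb).symm
          _ ≤ F (q : ℝ) := hFmono hq1.le
    choose q hq using key
    have hinj : Function.Injective q := by
      intro x y hxy
      apply Subtype.ext
      apply Subtype.ext
      calc ((x : Set.Icc (0 : ℝ) 1) : ℝ) = F ((q x : ℚ) : ℝ) := (hq x).symm
      _ = F ((q y : ℚ) : ℝ) := by rw [hxy]
      _ = ((y : Set.Icc (0 : ℝ) 1) : ℝ) := hq y
    haveI : Countable {x : Set.Icc (0 : ℝ) 1 // ¬ (f ⁻¹' {x}).Subsingleton} :=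
      hinj.countable
    exact Set.countable_coe_iff.mp this
  -- the fiber over 0
  have hL3 : ∃ m₀ ∈ f ⁻¹' {(⟨0, by norm_num⟩ : Set.Icc (0 : ℝ) 1)},
      (∀ a ∈ f ⁻¹' {(⟨0, by norm_num⟩ : Set.Icc (0 : ℝ) 1)}, m₀ ≤ a) ∧
      ∀ x ∈ f ⁻¹' {(⟨0, by norm_num⟩ : Set.Icc (0 : ℝ) 1)}, m₀ < x →
        ∃ y ∈ f ⁻¹' {(⟨0, by norm_num⟩ : Set.Icc (0 : ℝ) 1)}, m₀ < y ∧ y < x := by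
    have hm0 : m ∈ f ⁻¹' {(⟨0, by norm_num⟩ : Set.Icc (0 : ℝ) 1)} := by
      apply (hfib _ _).mpr
      exact hFgm
    refine ⟨m, hm0, fun a _ => hm a, ?_⟩
    intro a ha hma
    obtain ⟨y, hy1, hy2⟩ := hnoniso m hm a hma
    have hy0 : y ∈ f ⁻¹' {(⟨0, by norm_num⟩ : Set.Icc (0 : ℝ) 1)} := by
      apply (hfib _ _).mpr
      apply le_antisymm
      · calc F (g y) ≤ F (g a) := hFmono (hg.monotone hy2.le)
        _ = (0 : ℝ) := (hfib _ a).mp ha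
      · calc ((⟨0, by norm_num⟩ : Set.Icc (0 : ℝ) 1) : ℝ) = F (g m) := hFgm.symm
        _ ≤ F (g y) := hFmono (hg.monotone hy1.le)
    exact ⟨y, hy0, hy1, hy2⟩
  exact ⟨f, hfmono, hsurj, hfibcount, hfibmin, hfibmax, hfibsup, hL2, Or.inr hL3⟩
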